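/- arXiv:1409.5949 — 7 statements merged into one kernel-verified Lean document; each statement's English description precedes it below -/
import Mathlib

section
/- Let R be a prime ring with a derivation d such that d(x)y + x d(y) = d(x) d(y) for all x, y in R (the case n = 1 of the identity (d(xy))^n = d(x)^n d(y)^n). Then d = 0 or R is commutative. -/
theorem stmt_2 {R : Type*} [Ring R]
    (hprime : ∀ a b : R, (∀ r : R, a * r * b = 0) → a = 0 ∨ b = 0)
    (d : R → R) (hadd : ∀ x y : R, d (x + y) = d x + d y)
    (hleib : ∀ x y : R, d (x * y) = d x * y + x * d y)
    (hid : ∀ x y : R, d x * y + x * d y = d x * d y) :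
    (∀ x : R, d x = 0) ∨ (∀ x y : R, x * y = y * x) := by
  have key : ∀ x y z : R, (x - d x) * y * d z = 0 := by
    intro x y z
    have h1 := hid x (y * z)
    rw [hleib, mul_add, mul_add] at h1
    -- h1 : d x * (y * z) + (x * (d y * z) + x * (y * d z))
    --    = d x * (d y * z) + d x * (y * d z)
    have c : d x * (y * z) + x * (d y * z) = d x * (d y * z) := by
      rw [← mul_assoc, ← mul_assoc, ← mul_assoc, ← add_mul, hid]
    rw [← add_assoc, c] at h1
    have e : x * (y * d z) = d x * (y * d z) := add_left_cancel h1
    rw [sub_mul, sub_mul, mul_assoc, mul_assoc, e, sub_self]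
  by_cases hd : ∀ z : R, d z = 0
  · exact Or.inl hd
  · push_neg at hd
    obtain ⟨z0, hz0⟩ := hd
    have hdx : ∀ x : R, d x = x := by
      intro x
      rcases hprime (x - d x) (d z0) (fun r => key x r z0) with h | h
      · exact (sub_eq_zero.mp h).symm
      · exact absurd h hz0
    right
    intro x y
    have hzero : ∀ a b : R, a * b = 0 := by
      intro a b
      have h := hid a b
      rw [hdx, hdx] at h
      exact add_right_cancel (h.trans (zero_add (a * b)).symm)
    rw [hzero x y, hzero y x]
end

section
/- Let R be a semiprime ring and d a derivation of R such that d(r)[x, y] = 0 for all r, x, y in R. Then [x, d(r)] = 0 for all x, r in R, i.e., d maps R into its center. -/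
theorem stmt_3 {R : Type*} [Ring R]
    (hsemi : ∀ a : R, (∀ r : R, a * r * a = 0) → a = 0)
    (d : R → R) (hadd : ∀ x y : R, d (x + y) = d x + d y)
    (hleib : ∀ x y : R, d (x * y) = d x * y + x * d y)
    (h : ∀ r x y : R, d r * (x * y - y * x) = 0) :
    ∀ x r : R, x * d r - d r * x = 0 := by
  intro x r
  apply hsemi
  intro t
  have h1 : d r * (x * d r - d r * x) = 0 := h r x (d r)
  have h2 : d r * (t * (x * d r - d r * x)) = 0 := by
    have h4 := h r t (x * d r - d r * x)
    calc d r * (t * (x * d r - d r * x))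
        = d r * (t * (x * d r - d r * x) - (x * d r - d r * x) * t)
          + (d r * (x * d r - d r * x)) * t := by noncomm_ring
      _ = 0 := by rw [h4, h1]; simp
  have h3 : d r * ((x * t) * (x * d r - d r * x)) = 0 := by
    have h4 := h r (x * t) (x * d r - d r * x)
    calc d r * ((x * t) * (x * d r - d r * x))
        = d r * ((x * t) * (x * d r - d r * x) - (x * d r - d r * x) * (x * t))
          + (d r * (x * d r - d r * x)) * (x * t) := by noncomm_ring
      _ = 0 := by rw [h4, h1]; simp
  calc (x * d r - d r * x) * t * (x * d r - d r * x)
      = x * (d r * (t * (x * d r - d r * x)))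
        - d r * ((x * t) * (x * d r - d r * x)) := by noncomm_ring
    _ = 0 := by rw [h2, h3]; simp
end

section
/- Let V be a vector space over a field C with dim_C V ≥ 2, and let R be a dense subring of linear transformations of V (e.g., R = End_C(V) if V is finite dimensional). Let a ∈ R satisfy ([a,x]y + x[a,y])^n = [a,x]^n [a,y]^n for all x, y in R and a fixed integer n ≥ 1. Then for every v ∈ V, the vectors v and av are linearly dependent over C. -/
theorem stmt_10 {C V : Type*} [Field C] [AddCommGroup V] [Module C V]
    [FiniteDimensional C V] (hdim : 2 ≤ Module.finrank C V)
    (a : Module.End C V) (n : ℕ) (hn : 1 ≤ n)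
    (hid : ∀ x y : Module.End C V,
      ((a * x - x * a) * y + x * (a * y - y * a)) ^ n =
        (a * x - x * a) ^ n * (a * y - y * a) ^ n) :
    ∀ v : V, ¬ LinearIndependent C ![v, a v] := by
  classical
  intro v h
  have hvne : v ≠ 0 := by
    have := h.ne_zero 0
    simpa using this
  have hne : v ≠ a v := by
    intro e
    have : (0 : Fin 2) = 1 := h.injective (by
      simp only [Matrix.cons_val_zero, Matrix.cons_val_one, Matrix.head_cons]
      exact e)
    simp at this
  -- extend {v, a v} to a basis
  have hli : LinearIndepOn C id (Set.range ![v, a v]) :=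
    h.linearIndepOn_id
  let B := Module.Basis.extend hli
  have hmemv : v ∈ hli.extend (Set.subset_univ _) :=
    hli.subset_extend _ ⟨0, by simp⟩
  have hmemav : a v ∈ hli.extend (Set.subset_univ _) :=
    hli.subset_extend _ ⟨1, by simp⟩
  -- x sends a v to v, other basis vectors to 0
  set x : Module.End C V :=
    B.constr C (fun i => if (i : V) = a v then v else 0) with hx
  have hxav : x (a v) = v := by
    have : x (B ⟨a v, hmemav⟩) = v := by
      rw [hx, Module.Basis.constr_basis]; simp
    simpa [B, Module.Basis.extend_apply_self] using this
  have hxv : x v = 0 := by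
    have : x (B ⟨v, hmemv⟩) = 0 := by
      rw [hx, Module.Basis.constr_basis]; simp [hne]
    simpa [B, Module.Basis.extend_apply_self] using this
  set b : Module.End C V := a * x - x * a with hb
  have hbv : b v = -v := by
    simp [hb, LinearMap.sub_apply, Module.End.mul_apply, hxv, hxav]
  have hb0 : b ^ n = 0 := by
    have := hid x 1
    have hn' : n ≠ 0 := by omega
    simpa [mul_one, one_mul, sub_self, zero_pow hn'] using this
  have key : ∀ k : ℕ, (b ^ k) v = ((-1 : C) ^ k) • v := by
    intro k
    induction k with
    | zero => simp
    | succ k ih =>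
      rw [pow_succ, Module.End.mul_apply, hbv, map_neg, ih, pow_succ]
      simp [smul_smul, mul_comm]
  have := key n
  rw [hb0] at this
  have : ((-1 : C) ^ n) • v = 0 := by simpa using this.symm
  rcases smul_eq_zero.mp this with h1 | h2
  · exact pow_ne_zero n (by norm_num : (-1 : C) ≠ 0) h1
  · exact hvne h2
end

section
/- Let F be a field, V a finite-dimensional F-vector space with dim V ≥ 2, and R = End_F(V). Suppose a ∈ R satisfies ([a,x]y + x[a,y])^n = [a,x]^n [a,y]^n for all x, y ∈ R, for a fixed integer n ≥ 1. Then a is a scalar multiple of the identity. -/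
/-- If every vector is an eigenvector of `a`, then `a` is scalar. -/
lemma aux_scalar {F V : Type*} [Field F] [AddCommGroup V] [Module F V]
    (a : Module.End F V) (h : ∀ v : V, ∃ c : F, a v = c • v) :
    ∃ α : F, a = α • (1 : Module.End F V) := by
  by_cases hV : ∀ w : V, w = 0
  · exact ⟨0, by ext w; simp [hV w]⟩
  push_neg at hV
  obtain ⟨v₀, hv₀⟩ := hV
  obtain ⟨c₀, hc₀⟩ := h v₀
  refine ⟨c₀, ?_⟩
  ext w
  simp only [LinearMap.smul_apply, Module.End.one_apply]
  rcases eq_or_ne w 0 with rfl | hw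
  · simp
  obtain ⟨c, hc⟩ := h w
  by_cases hli : ∃ k : F, w = k • v₀
  · obtain ⟨k, rfl⟩ := hli
    rw [map_smul, hc₀, smul_smul, smul_smul, mul_comm]
  · have hind : LinearIndependent F ![w, v₀] := by
      rw [linearIndependent_fin2]
      refine ⟨hv₀, fun k hk => hli ⟨k, hk.symm⟩⟩
    obtain ⟨c', hc'⟩ := h (v₀ + w)
    have key : (c - c') • w + (c₀ - c') • v₀ = 0 := by
      have h3 : a (v₀ + w) = c₀ • v₀ + c • w := by rw [map_add, hc₀, hc]
      rw [hc', smul_add] at h3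
      rw [sub_smul, sub_smul, sub_add_sub_comm]
      refine sub_eq_zero.mpr ?_
      rw [add_comm, add_comm (c' • w)]
      exact h3.symm
    obtain ⟨h1, h2⟩ := LinearIndependent.pair_iff.mp hind _ _ key
    rw [hc, sub_eq_zero.mp h1, sub_eq_zero.mp h2]

theorem stmt_13 {F V : Type*} [Field F] [AddCommGroup V] [Module F V]
    [FiniteDimensional F V] (hdim : 2 ≤ Module.finrank F V)
    (a : Module.End F V) (n : ℕ) (hn : 1 ≤ n)
    (hid : ∀ x y : Module.End F V,
      ((a * x - x * a) * y + x * (a * y - y * a)) ^ n =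
        (a * x - x * a) ^ n * (a * y - y * a) ^ n) :
    ∃ α : F, a = α • (1 : Module.End F V) := by
  -- From y = 1 : [a,x]^n = 0 for all x.
  have h0 : ∀ x : Module.End F V, (a * x - x * a) ^ n = 0 := by
    intro x
    have := hid x 1
    simpa [sub_self, zero_pow (Nat.one_le_iff_ne_zero.mp hn)] using this
  apply aux_scalar
  intro v
  by_contra hcon
  push_neg at hcon
  have hv : v ≠ 0 := by
    intro h
    exact hcon 0 (by simp [h])
  -- ![a v, v] is linearly independent
  have hind : LinearIndependent F ![a v, v] := by
    rw [linearIndependent_fin2]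
    refine ⟨hv, fun k hk => hcon k hk.symm⟩
  -- build a functional f with f v = 0, f (a v) = 1
  have hind' := (linearIndepOn_id_range_iff hind.injective).mpr hind
  let B := Module.Basis.extend hind'
  have hmem_av : a v ∈ hind'.extend (Set.subset_univ _) :=
    hind'.subset_extend _ ⟨0, rfl⟩
  have hmem_v : v ∈ hind'.extend (Set.subset_univ _) :=
    hind'.subset_extend _ ⟨1, rfl⟩
  have hne : v ≠ a v := by
    intro h
    have h01 : (0 : Fin 2) = 1 := hind.injective (by simp [h.symm])
    exact absurd h01 (by decide)
  let f : V →ₗ[F] F := B.coord ⟨a v, hmem_av⟩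
  have hfav : f (a v) = 1 := by
    have hB : B ⟨a v, hmem_av⟩ = a v := Module.Basis.extend_apply_self hind' _
    classical
    simp only [f, Module.Basis.coord_apply]
    have h2 : B.repr (a v) = B.repr (B ⟨a v, hmem_av⟩) := by rw [hB]
    rw [h2, Module.Basis.repr_self_apply]
    simp
  have hfv : f v = 0 := by
    have hB : B ⟨v, hmem_v⟩ = v := Module.Basis.extend_apply_self hind' _
    classical
    simp only [f, Module.Basis.coord_apply]
    have h2 : B.repr v = B.repr (B ⟨v, hmem_v⟩) := by rw [hB]
    rw [h2, Module.Basis.repr_self_apply]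
    simp only [ite_eq_right_iff]
    intro heq
    rw [Subtype.mk.injEq] at heq
    exact absurd heq hne
  -- the endomorphism x : w ↦ f w • v
  let x : Module.End F V := f.smulRight v
  have hxv : x v = 0 := by simp [x, hfv]
  have hxav : x (a v) = v := by simp [x, hfav]
  have hcv : (a * x - x * a) v = -v := by
    simp only [LinearMap.sub_apply, Module.End.mul_apply, hxv, hxav, map_zero, zero_sub]
  have hpow : ∀ k : ℕ, ((a * x - x * a) ^ k) v = ((-1 : F) ^ k) • v := by
    intro k
    induction k with
    | zero => simp
    | succ k ih =>
        rw [pow_succ, Module.End.mul_apply, hcv, map_neg, ih]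
        rw [pow_succ]
        module
  have := hpow n
  rw [h0 x] at this
  simp only [LinearMap.zero_apply] at this
  have h1 : ((-1 : F) ^ n) ≠ 0 := by
    simp
  exact hv ((smul_eq_zero.mp this.symm).resolve_left h1)
end

section
/- Let R = M_k(F) for a field F and k ≥ 2, and let d be the inner derivation d(x) = [a, x] for some a ∈ M_k(F). If (d(xy))^n = (d(x))^n (d(y))^n for all x, y ∈ M_k(F) and a fixed n ≥ 1, then d = 0. -/
open Matrix

lemma sbm_mulVec {F : Type*} [Field F] {k : ℕ} (i j : Fin k) (c : F) (w : Fin k → F) :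
    (Matrix.single i j c) *ᵥ w = Pi.single i (c * w j) := by
  funext p
  simp only [Matrix.mulVec, dotProduct, Matrix.single, Matrix.of_apply,
    Pi.single_apply]
  rcases eq_or_ne i p with rfl | hp
  · simp [ite_and]
  · simp [Ne.symm hp, hp]

theorem stmt_14 {F : Type*} [Field F] (k : ℕ) (hk : 2 ≤ k)
    (a : Matrix (Fin k) (Fin k) F)
    (d : Matrix (Fin k) (Fin k) F → Matrix (Fin k) (Fin k) F)
    (hd : ∀ x, d x = a * x - x * a)
    (n : ℕ) (hn : 1 ≤ n)
    (hid : ∀ x y : Matrix (Fin k) (Fin k) F,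
      (d (x * y)) ^ n = (d x) ^ n * (d y) ^ n) :
    ∀ x, d x = 0 := by
  have hn0 : n ≠ 0 := by omega
  -- Step 0: every d x is nilpotent of index n
  have hnil : ∀ x : Matrix (Fin k) (Fin k) F, (a * x - x * a) ^ n = 0 := by
    intro x
    have h := hid x 1
    rw [mul_one, hd, hd] at h
    simpa [zero_pow hn0] using h
  -- Step 1: eigenvector lemma
  have hvec : ∀ (x : Matrix (Fin k) (Fin k) F) (v : Fin k → F),
      (a * x - x * a) *ᵥ v = -v → v = 0 := by
    intro x v hv
    set M := a * x - x * a with hM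
    have hpow : ∀ m : ℕ, (M ^ m) *ᵥ v = ((-1 : F) ^ m) • v := by
      intro m
      induction m with
      | zero => simp
      | succ m ih =>
        rw [pow_succ, ← Matrix.mulVec_mulVec, hv, Matrix.mulVec_neg, ih,
          pow_succ, mul_neg_one, neg_smul]
    have := hpow n
    rw [hnil x] at this
    have h0 : ((-1 : F) ^ n) • v = 0 := by rw [← this]; simp
    have hne : ((-1 : F) ^ n) ≠ 0 := by
      simp
    exact (smul_eq_zero.mp h0).resolve_left hne
  -- Step 2: off-diagonal entries vanish
  have hoff : ∀ i j : Fin k, i ≠ j → a j i = 0 := by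
    intro i j hij
    by_contra hne
    set c := a j i with hc
    set x := c⁻¹ • Matrix.single i j (1 : F) with hx
    set v : Fin k → F := Pi.single i 1 with hv
    have key : (a * x - x * a) *ᵥ v = -v := by
      rw [Matrix.sub_mulVec, ← Matrix.mulVec_mulVec, ← Matrix.mulVec_mulVec]
      have h1 : x *ᵥ v = 0 := by
        rw [hx, hv, Matrix.smul_mulVec, sbm_mulVec]
        simp [Pi.single_apply, hij.symm]
      have h2 : x *ᵥ (a *ᵥ v) = v := by
        rw [hx, hv, Matrix.smul_mulVec, sbm_mulVec]
        simp only [Matrix.mulVec_single, one_mul, mul_one, MulOpposite.op_one, one_smul,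
          Matrix.col_apply]
        rw [← hc]
        ext p
        simp [Pi.single_apply, Pi.smul_apply, inv_mul_cancel₀ hne]
      rw [h1, h2, Matrix.mulVec_zero, zero_sub]
    have := hvec x v key
    have : v i = 0 := by rw [this]; rfl
    simp [hv] at this
  -- Step 3: diagonal entries are equal
  have hdiag : ∀ i j : Fin k, a i i = a j j := by
    intro i j
    rcases eq_or_ne i j with rfl | hij
    · rfl
    by_contra hne
    set c := a i i - a j j with hc
    have hcne : c ≠ 0 := sub_ne_zero_of_ne hne
    set v : Fin k → F := Pi.single i 1 + Pi.single j 1 with hv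
    set x := c⁻¹ • (Matrix.single i i (1:F) + Matrix.single j i (1:F)
        - Matrix.single i j (1:F) - Matrix.single j j (1:F)) with hx
    have hw : ∀ (w : Fin k → F), x *ᵥ w
        = (c⁻¹ * (w i - w j)) • ((Pi.single i (1:F)) + Pi.single j 1) := by
      intro w
      rw [hx, Matrix.smul_mulVec, Matrix.sub_mulVec, Matrix.sub_mulVec,
        Matrix.add_mulVec, sbm_mulVec, sbm_mulVec, sbm_mulVec, sbm_mulVec]
      ext p
      simp only [Pi.smul_apply, Pi.add_apply, Pi.sub_apply, Pi.single_apply, one_mul,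
        smul_eq_mul]
      split_ifs <;> ring
    have hvi : v i = 1 := by simp [hv, Pi.single_apply, Ne.symm hij]
    have hvj : v j = 1 := by simp [hv, Pi.single_apply, hij]
    have key : (a * x - x * a) *ᵥ v = -v := by
      rw [Matrix.sub_mulVec, ← Matrix.mulVec_mulVec, ← Matrix.mulVec_mulVec]
      have h1 : x *ᵥ v = 0 := by
        rw [hw, hvi, hvj]; simp
      have h2 : x *ᵥ (a *ᵥ v) = v := by
        rw [hw]
        have havi : (a *ᵥ v) i = a i i := by
          rw [hv, Matrix.mulVec_add]
          simp [hoff j i (Ne.symm hij)]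
        have havj : (a *ᵥ v) j = a j j := by
          rw [hv, Matrix.mulVec_add]
          simp [hoff i j hij]
        rw [havi, havj, ← hc, inv_mul_cancel₀ hcne, one_smul, hv]
      rw [h1, h2, Matrix.mulVec_zero, zero_sub]
    have hv0 := hvec x v key
    rw [hv0] at hvi
    simp at hvi
  -- Conclude: a is scalar
  have i0 : Fin k := ⟨0, by omega⟩
  have ha : a = (a i0 i0) • (1 : Matrix (Fin k) (Fin k) F) := by
    ext p q
    rcases eq_or_ne p q with rfl | hpq
    · simp [Matrix.one_apply, hdiag p i0]
    · simp [Matrix.one_apply, hpq, hoff q p (Ne.symm hpq)]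
  intro x
  rw [hd, ha, Matrix.smul_mul, Matrix.mul_smul, one_mul, mul_one, sub_self]
end

section
/- Let R be a semiprime ring and d a derivation of R such that d(R)[R,R] = 0 (i.e., d(r)[x,y] = 0 for all r, x, y ∈ R). Then [R, d(R)] R [R, d(R)] = 0, i.e., [x, d(r)] s [y, d(t)] = 0 for all x, y, s, r, t ∈ R. -/
theorem stmt_16 {R : Type*} [Ring R]
    (hsemi : ∀ a : R, (∀ r : R, a * r * a = 0) → a = 0)
    (d : R → R) (hadd : ∀ x y : R, d (x + y) = d x + d y)
    (hleib : ∀ x y : R, d (x * y) = d x * y + x * d y)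
    (h : ∀ r x y : R, d r * (x * y - y * x) = 0) :
    ∀ x r s y t : R, (x * d r - d r * x) * s * (y * d t - d t * y) = 0 := by
  have key : ∀ a b x y : R, d a * b * (x * y - y * x) = 0 := by
    intro a b x y
    have h1 := h (a * b) x y
    rw [hleib, add_mul, mul_assoc a, h b x y, mul_zero, add_zero] at h1
    exact h1
  intro x r s y t
  have e : (x * d r - d r * x) * s * (y * d t - d t * y) =
      x * (d r * s * (y * d t - d t * y)) - d r * (x * s) * (y * d t - d t * y) := by
    noncomm_ring
  rw [e, key r s y (d t), key r (x * s) y (d t), mul_zero, sub_zero]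
end

section
/- Let R be a prime ring and a ∈ R such that ([a,x]y + x[a,y])^n = [a,x]^n [a,y]^n for all x, y ∈ R and a fixed integer n ≥ 1. Then R is commutative or a lies in the extended centroid (in particular, if R is a simple unital algebra, a is central in R). -/
section Aux

variable {R : Type*} [Ring R]

/-- In a simple module, if `x • w = 0` and all commutators `[a,·]` are `n`-nilpotent,
then `x • (a • w) = 0`. -/
private theorem aux_zero {V : Type*} [AddCommGroup V] [Module R V] [IsSimpleModule R V]
    {a : R} {n : ℕ} (hnil : ∀ x : R, (a * x - x * a) ^ n = 0)
    (w : V) (x : R) (hxw : x • w = 0) : x • (a • w) = 0 := by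
  by_cases hw : w = 0
  · simp [hw]
  by_contra h
  set φ := LinearMap.toSpanSingleton R V w with hφ
  set ψ := LinearMap.toSpanSingleton R V (a • w) with hψ
  have hxker : x ∈ LinearMap.ker φ := by
    rw [LinearMap.mem_ker, hφ, LinearMap.toSpanSingleton_apply, hxw]
  have hN : Submodule.map ψ (LinearMap.ker φ) = ⊤ := by
    rcases eq_bot_or_eq_top (Submodule.map ψ (LinearMap.ker φ)) with hb | ht
    · exfalso
      apply h
      have hx : x • (a • w) ∈ Submodule.map ψ (LinearMap.ker φ) :=
        ⟨x, hxker, by rw [hψ, LinearMap.toSpanSingleton_apply]⟩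
      rw [hb] at hx
      simpa using hx
    · exact ht
  have hwmem : w ∈ Submodule.map ψ (LinearMap.ker φ) := by rw [hN]; trivial
  obtain ⟨y, hy, hyw⟩ := hwmem
  simp only [SetLike.mem_coe, LinearMap.mem_ker, hφ, LinearMap.toSpanSingleton_apply] at hy
  rw [hψ, LinearMap.toSpanSingleton_apply] at hyw
  -- hy : y • w = 0, hyw : y • (a • w) = w
  set b := a * y - y * a with hb
  have hbw : b • w = -w := by
    rw [hb, sub_smul, mul_smul, mul_smul, hy, hyw, smul_zero, zero_sub]
  have key : ∀ k : ℕ, b ^ k • w = w ∨ b ^ k • w = -w := by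
    intro k
    induction k with
    | zero => left; simp
    | succ k ih =>
      rw [pow_succ', mul_smul]
      rcases ih with h1 | h1 <;> rw [h1]
      · right; exact hbw
      · left; rw [smul_neg, hbw, neg_neg]
  have hbn : b ^ n = 0 := hnil y
  rcases key n with h1 | h1 <;> rw [hbn, zero_smul] at h1
  · exact hw h1.symm
  · exact hw (by rw [← neg_neg w, ← h1, neg_zero])

/-- Every element of a simple module is an `R`-multiple of a fixed nonzero element. -/
private theorem aux_surj {V : Type*} [AddCommGroup V] [Module R V] [IsSimpleModule R V]
    (w : V) (hw : w ≠ 0) (v : V) : ∃ x : R, x • w = v := by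
  have hsp : Submodule.span R {w} = ⊤ := by
    rcases eq_bot_or_eq_top (Submodule.span R {w}) with hb | ht
    · exfalso
      apply hw
      have := Submodule.mem_span_singleton_self (R := R) w
      rw [hb] at this
      simpa using this
    · exact ht
  have hv : v ∈ Submodule.span R {w} := by rw [hsp]; trivial
  exact Submodule.mem_span_singleton.mp hv

/-- Construction of the "local eigenvalue" endomorphism `λ_w` with
`λ_w (x • w) = x • (a • w)`. -/
private theorem aux_lambda {V : Type*} [AddCommGroup V] [Module R V] [IsSimpleModule R V]
    {a : R} {n : ℕ} (hnil : ∀ x : R, (a * x - x * a) ^ n = 0)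
    (w : V) (hw : w ≠ 0) :
    ∃ ν : V →ₗ[R] V, ∀ x : R, ν (x • w) = x • (a • w) := by
  choose g hg using aux_surj (R := R) w hw
  have key : ∀ (x : R) (v : V), x • w = v → g v • (a • w) = x • (a • w) := by
    intro x v hx
    have h0 : (g v - x) • w = 0 := by rw [sub_smul, hg, hx, sub_self]
    have h1 := aux_zero hnil w (g v - x) h0
    rw [sub_smul] at h1
    exact sub_eq_zero.mp h1
  refine ⟨⟨⟨fun v => g v • (a • w), ?_⟩, ?_⟩, ?_⟩
  · intro v₁ v₂
    have h12 : (g v₁ + g v₂) • w = v₁ + v₂ := by rw [add_smul, hg, hg]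
    rw [key (g v₁ + g v₂) (v₁ + v₂) h12, add_smul]
  · intro x v
    dsimp only
    have hxv : (x * g v) • w = x • v := by rw [mul_smul, hg]
    simp only [RingHom.id_apply]
    rw [key (x * g v) (x • v) hxv, mul_smul]
  · intro x
    exact key x (x • w) rfl

end Aux

/-- Herstein-type theorem: in a simple ring, if all commutators `[a,x]` are
nilpotent of bounded index, then `a` is central. -/
private theorem aux_central {R : Type*} [Ring R] [IsSimpleRing R] (a : R) (n : ℕ)
    (hnil : ∀ x : R, (a * x - x * a) ^ n = 0) (r : R) : a * r = r * a := by
  obtain ⟨M, hM⟩ := Ideal.exists_maximal R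
  haveI : IsSimpleModule R (R ⧸ M) := isSimpleModule_iff_isCoatom.mpr (Ideal.isMaximal_def.mp hM)
  -- faithfulness of R ⧸ M
  have faithful : ∀ b : R, (∀ v : R ⧸ M, b • v = 0) → b = 0 := by
    intro b hb
    haveI := IsSimpleRing.simple (R := R)
    set J : TwoSidedIdeal R := TwoSidedIdeal.mk' {c : R | ∀ y : R, c * y ∈ M}
      (fun y => by rw [zero_mul]; exact M.zero_mem)
      (fun {c d} hc hd y => by rw [add_mul]; exact M.add_mem (hc y) (hd y))
      (fun {c} hc y => by rw [neg_mul]; exact neg_mem (hc y))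
      (fun {c d} hd y => by rw [mul_assoc]; exact M.smul_mem c (hd y))
      (fun {c d} hc y => by rw [mul_assoc]; exact hc (d * y)) with hJ
    have hbJ : b ∈ J := by
      rw [hJ, TwoSidedIdeal.mem_mk']
      intro y
      have h1 := hb (Submodule.Quotient.mk y)
      rw [← Submodule.Quotient.mk_smul, Submodule.Quotient.mk_eq_zero] at h1
      exact h1
    rcases eq_bot_or_eq_top J with hbot | htop
    · rw [hbot, TwoSidedIdeal.mem_bot] at hbJ
      exact hbJ
    · exfalso
      have h1 : (1 : R) ∈ J := by rw [htop]; trivial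
      rw [hJ, TwoSidedIdeal.mem_mk'] at h1
      apply hM.ne_top
      rw [Ideal.eq_top_iff_one]
      simpa using h1 1
  have main : ∀ v : R ⧸ M, (a * r - r * a) • v = 0 := by
    by_cases hdim : ∀ u v : R ⧸ M, u ≠ 0 → v ≠ 0 → ∃ ν : (R ⧸ M) →ₗ[R] (R ⧸ M), ν u = v
    · -- "one-dimensional" case : direct nilpotency argument
      intro v
      by_contra hbv
      have hvne : v ≠ 0 := fun h => hbv (by rw [h, smul_zero])
      set b := a * r - r * a with hbdef
      obtain ⟨ν, hν⟩ := hdim (b • v) v hbv hvne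
      have L : ∀ m : ℕ, b ^ m • v = ν (b ^ (m + 1) • v) := by
        intro m
        calc b ^ m • v = b ^ m • ν (b • v) := by rw [hν]
          _ = ν (b ^ m • (b • v)) := (ν.map_smul _ _).symm
          _ = ν (b ^ (m + 1) • v) := by rw [smul_smul, ← pow_succ]
      have Q : ∀ j : ℕ, b • v = (ν ^ j) (b ^ (j + 1) • v) := by
        intro j
        induction j with
        | zero => simpa using L 0
        | succ j ih =>
          rw [ih, L (j + 1), pow_succ ν j, Module.End.mul_apply]
      have hfin := Q n
      have hbn1 : b ^ (n + 1) = 0 := by rw [pow_succ, hnil r, zero_mul]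
      rw [hbn1, zero_smul, map_zero] at hfin
      exact hbv hfin
    · -- there exist "independent" vectors
      push_neg at hdim
      obtain ⟨u₀, v₀, hu₀, hv₀, hnd⟩ := hdim
      -- global choice of local eigenvalue maps
      have hex : ∀ w : R ⧸ M, ∃ g : (R ⧸ M) →ₗ[R] (R ⧸ M),
          w ≠ 0 → ∀ x : R, g (x • w) = x • (a • w) := by
        intro w
        by_cases hw : w = 0
        · exact ⟨0, fun h => absurd hw h⟩
        · obtain ⟨ν, hν⟩ := aux_lambda hnil w hw
          exact ⟨ν, fun _ => hν⟩
      choose Λ hΛ using hex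
      -- Schur's lemma
      have schur : ∀ (ν : (R ⧸ M) →ₗ[R] (R ⧸ M)) (v : R ⧸ M), ν v ≠ 0 →
          Function.Bijective ν := by
        intro ν v hv
        refine ν.bijective_or_eq_zero.resolve_right fun h => hv ?_
        rw [h]
        rfl
      -- dichotomy: independent or dependent
      have dich : ∀ w v : R ⧸ M, w ≠ 0 → v ≠ 0 →
          (∀ μ ν' : (R ⧸ M) →ₗ[R] (R ⧸ M), μ w = ν' v → μ w = 0 ∧ ν' v = 0) ∨
          ∃ ν' : (R ⧸ M) →ₗ[R] (R ⧸ M), ν' w = v := by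
        intro w v hw hv
        by_cases hdep : ∃ ν' : (R ⧸ M) →ₗ[R] (R ⧸ M), ν' w = v
        · right; exact hdep
        · left
          intro μ ν' hμν
          by_cases hνv : ν' v = 0
          · exact ⟨hμν.trans hνv, hνv⟩
          · exfalso
            have hbij := schur ν' v hνv
            set e := LinearEquiv.ofBijective ν' hbij with he
            apply hdep
            refine ⟨(e.symm : (R ⧸ M) →ₗ[R] (R ⧸ M)).comp μ, ?_⟩
            have hev : e v = ν' v := rfl
            rw [LinearMap.comp_apply, LinearEquiv.coe_coe, hμν, ← hev,
              LinearEquiv.symm_apply_apply]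
      -- independent vectors have equal eigenvalue maps
      have claimC : ∀ w v : R ⧸ M, w ≠ 0 → v ≠ 0 →
          (∀ μ ν' : (R ⧸ M) →ₗ[R] (R ⧸ M), μ w = ν' v → μ w = 0 ∧ ν' v = 0) →
          Λ w = Λ v := by
        intro w v hw hv hind
        have hs : w + v ≠ 0 := by
          intro hsum
          have hvw : v = -w := by
            rw [eq_neg_iff_add_eq_zero, add_comm]
            exact hsum
          obtain ⟨h1, _⟩ := hind LinearMap.id (-LinearMap.id)
            (by rw [LinearMap.id_apply, LinearMap.neg_apply, LinearMap.id_apply, hvw, neg_neg])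
          rw [LinearMap.id_apply] at h1
          exact hw h1
        have e1 : Λ (w + v) w + Λ (w + v) v = a • w + a • v := by
          rw [← map_add]
          have h1 := hΛ (w + v) hs 1
          rw [one_smul, one_smul] at h1
          rw [h1, smul_add]
        have e2 : Λ w w = a • w := by
          have h1 := hΛ w hw 1
          rwa [one_smul, one_smul] at h1
        have e3 : Λ v v = a • v := by
          have h1 := hΛ v hv 1
          rwa [one_smul, one_smul] at h1
        have h1 : Λ (w + v) w + Λ (w + v) v = Λ w w + Λ v v := by rw [e1, e2, e3]
        have h2 : (Λ (w + v) - Λ w) w = (Λ v - Λ (w + v)) v := by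
          rw [LinearMap.sub_apply, LinearMap.sub_apply, sub_eq_sub_iff_add_eq_add]
          exact h1.trans (add_comm _ _)
        obtain ⟨hz1, hz2⟩ := hind _ _ h2
        rw [LinearMap.sub_apply] at hz1 hz2
        have hsw : Λ (w + v) w = Λ w w := sub_eq_zero.mp hz1
        have hsv : Λ (w + v) v = Λ v v := (sub_eq_zero.mp hz2).symm
        have ewfull : Λ (w + v) = Λ w := by
          apply LinearMap.ext
          intro z
          obtain ⟨x, hx⟩ := aux_surj (R := R) w hw z
          rw [← hx, LinearMap.map_smul, LinearMap.map_smul, hsw]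
        have evfull : Λ (w + v) = Λ v := by
          apply LinearMap.ext
          intro z
          obtain ⟨x, hx⟩ := aux_surj (R := R) v hv z
          rw [← hx, LinearMap.map_smul, LinearMap.map_smul, hsv]
        rw [← ewfull, evfull]
      -- all eigenvalue maps are equal
      have claimD : ∀ w v : R ⧸ M, w ≠ 0 → v ≠ 0 → Λ w = Λ v := by
        intro w v hw hv
        rcases dich w v hw hv with hind | ⟨ν, hν⟩
        · exact claimC w v hw hv hind
        · -- v = ν w ; find u independent from w
          have hu : ∃ u : R ⧸ M, u ≠ 0 ∧
              ∀ μ ν' : (R ⧸ M) →ₗ[R] (R ⧸ M), μ w = ν' u → μ w = 0 ∧ ν' u = 0 := by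
            rcases dich w u₀ hw hu₀ with h | ⟨ρ, hρ⟩
            · exact ⟨u₀, hu₀, h⟩
            · rcases dich w v₀ hw hv₀ with h | ⟨σ, hσ⟩
              · exact ⟨v₀, hv₀, h⟩
              · exfalso
                have hbij := schur ρ w (by rw [hρ]; exact hu₀)
                set e := LinearEquiv.ofBijective ρ hbij with he
                apply hnd (σ.comp (e.symm : (R ⧸ M) →ₗ[R] (R ⧸ M)))
                have hew : e w = ρ w := rfl
                rw [LinearMap.comp_apply, LinearEquiv.coe_coe, ← hρ, ← hew,
                  LinearEquiv.symm_apply_apply]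
                exact hσ
          obtain ⟨u, hune, hwu⟩ := hu
          have hvu : ∀ μ ν' : (R ⧸ M) →ₗ[R] (R ⧸ M), μ v = ν' u → μ v = 0 ∧ ν' u = 0 := by
            intro μ ν' hh
            have h1 := hwu (μ.comp ν) ν' (by rw [LinearMap.comp_apply, hν]; exact hh)
            rw [LinearMap.comp_apply, hν] at h1
            exact h1
          rw [claimC w u hw hune hwu, claimC v u hv hune hvu]
      -- conclude
      intro v
      by_cases hv : v = 0
      · rw [hv, smul_zero]
      have expand : (a * r - r * a) • v = a • (r • v) - r • (a • v) := by
        rw [sub_smul, mul_smul, mul_smul]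
      rw [expand]
      by_cases hrv : r • v = 0
      · rw [hrv, smul_zero, zero_sub, neg_eq_zero]
        exact aux_zero hnil v r hrv
      · have h1 : a • (r • v) = Λ (r • v) (r • v) := by
          have h2 := hΛ (r • v) hrv 1
          rw [one_smul, one_smul] at h2
          exact h2.symm
        have h2 : r • (a • v) = Λ v (r • v) := (hΛ v hv r).symm
        rw [h1, h2, claimD (r • v) v hrv hv, sub_self]
  have hz := faithful _ main
  exact sub_eq_zero.mp hz

theorem stmt_19 {R : Type*} [Ring R] [IsSimpleRing R]
    (a : R) (n : ℕ) (hn : 1 ≤ n)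
    (hid : ∀ x y : R,
      ((a * x - x * a) * y + x * (a * y - y * a)) ^ n =
        (a * x - x * a) ^ n * (a * y - y * a) ^ n) :
    (∀ x y : R, x * y = y * x) ∨ (∀ r : R, a * r = r * a) := by
  right
  intro r
  have hn' : n ≠ 0 := by omega
  have hnil : ∀ x : R, (a * x - x * a) ^ n = 0 := by
    intro x
    have h := hid x 1
    simp only [mul_one, one_mul, sub_self, mul_zero, add_zero, zero_pow hn'] at h
    exact h
  exact aux_central a n hnil r
end
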